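/- arXiv:1709.05709 — 2 statements merged into one kernel-verified Lean document; each statement's English description precedes it below -/
import Mathlib

section
/- In a multitree with k roots, every vertex has in-degree at most k. -/
open Classical

/-- Reachability: reflexive-transitive closure of the edge relation. -/
def Reach {V : Type*} (E : V → V → Prop) : V → V → Prop :=
  Relation.ReflTransGen E

/-- A directed graph is acyclic if no vertex lies on a nontrivial cycle. -/
def Acyclic {V : Type*} (E : V → V → Prop) : Prop :=
  ∀ v : V, ¬ Relation.TransGen E v v

/-- The in-degree of a vertex `v`. -/
noncomputable def inDegree {V : Type*} [Fintype V] (E : V → V → Prop) (v : V) : ℕ :=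
  (Finset.univ.filter (fun u => E u v)).card

/-- The set of vertices reachable from each vertex induces an arborescence:
every vertex `v` reachable from `r` and distinct from `r` has exactly one parent
among the vertices reachable from `r`. -/
def ReachableSetsAreArborescences {V : Type*} (E : V → V → Prop) : Prop :=
  ∀ r v : V, Reach E r v → v ≠ r → ∃! u : V, Reach E r u ∧ E u v

/-- A root is a vertex of in-degree zero. -/
def IsRoot {V : Type*} (E : V → V → Prop) (r : V) : Prop :=
  ∀ u : V, ¬ E u r

lemma exists_root_reach {V : Type*} [Fintype V] (E : V → V → Prop)
    (hacyc : Acyclic E) : ∀ v : V, ∃ r : V, IsRoot E r ∧ Reach E r v := by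
  haveI : IsIrrefl V (Relation.TransGen E) := ⟨hacyc⟩
  have hwf : WellFounded (Relation.TransGen E) :=
    Finite.wellFounded_of_trans_of_irrefl _
  have hwfE : WellFounded E := Subrelation.wf (fun h => Relation.TransGen.single h) hwf
  intro v
  induction v using hwfE.induction with
  | _ v ih =>
    by_cases hr : IsRoot E v
    · exact ⟨v, hr, Relation.ReflTransGen.refl⟩
    · simp only [IsRoot, not_forall, not_not] at hr
      obtain ⟨u, hu⟩ := hr
      obtain ⟨r, hr, hreach⟩ := ih u hu
      exact ⟨r, hr, hreach.tail hu⟩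

/-- In a multitree with `k` roots, every vertex has in-degree at most `k`. -/
theorem multitree_inDegree_le_roots {V : Type*} [Fintype V] (E : V → V → Prop) (k : ℕ)
    (hacyc : Acyclic E) (harb : ReachableSetsAreArborescences E)
    (hroots : (Finset.univ.filter (fun r => IsRoot E r)).card = k) :
    ∀ v : V, inDegree E v ≤ k := by
  intro v
  rw [← hroots]
  apply Finset.card_le_card_of_injOn
    (fun u => Classical.choose (exists_root_reach E hacyc u))
  · intro u hu
    simp only [Finset.mem_coe, Finset.mem_filter, Finset.mem_univ, true_and]
    exact (Classical.choose_spec (exists_root_reach E hacyc u)).1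
  · intro u1 hu1 u2 hu2 heq
    simp only [Finset.mem_coe, Finset.mem_filter, Finset.mem_univ, true_and] at hu1 hu2
    obtain ⟨hr1, hreach1⟩ := Classical.choose_spec (exists_root_reach E hacyc u1)
    obtain ⟨hr2, hreach2⟩ := Classical.choose_spec (exists_root_reach E hacyc u2)
    dsimp only at heq
    set r := Classical.choose (exists_root_reach E hacyc u1) with hrdef
    rw [← heq] at hreach2
    have hvr : v ≠ r := fun h => hr1 u1 (h ▸ hu1)
    obtain ⟨w, hw, huniq⟩ := harb r v (hreach1.tail hu1) hvr
    exact (huniq u1 ⟨hreach1, hu1⟩).trans (huniq u2 ⟨hreach2, hu2⟩).symm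
end

section
/- Let G = (V,E) be a finite cubic graph with a proper 3-edge-coloring and H the associated 3-root digraph as above. For a positive integer k, there exists a placement P ⊆ V with |P| = k such that at most 3 vertices of H have failure number equal to k and no vertex of H has failure number strictly between 1 and k (assuming k ≥ 2) if and only if G admits an independent set of size k. -/
open Classical

/-- The 3-root digraph associated to `G` with 3-edge-coloring `c`. -/
def ThreeRootDigraph {V : Type*} (G : SimpleGraph V) (c : G.edgeSet → Fin 3) :
    (Fin 3 ⊕ (G.edgeSet ⊕ V)) → (Fin 3 ⊕ (G.edgeSet ⊕ V)) → Prop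
  | Sum.inl i, Sum.inr (Sum.inl e) => c e = i
  | Sum.inr (Sum.inl e), Sum.inr (Sum.inr v) => v ∈ (e : Sym2 V)
  | _, _ => False

/-- `c` is a proper 3-edge-coloring. -/
def ProperEdgeColoring {V : Type*} (G : SimpleGraph V) (c : G.edgeSet → Fin 3) : Prop :=
  ∀ e f : G.edgeSet, e ≠ f → (∃ v : V, v ∈ (e : Sym2 V) ∧ v ∈ (f : Sym2 V)) → c e ≠ c f

/-- `G` is cubic: every vertex has exactly 3 neighbors. -/
def IsCubic {V : Type*} [Fintype V] (G : SimpleGraph V) : Prop :=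
  ∀ v : V, (Finset.univ.filter (fun w => G.Adj v w)).card = 3

/-- The failure number of a node `u` with respect to a placement `P ⊆ V`. -/
noncomputable def failureNumber {V : Type*} [DecidableEq V] (G : SimpleGraph V)
    (c : G.edgeSet → Fin 3) (P : Finset V) (u : Fin 3 ⊕ (G.edgeSet ⊕ V)) : ℕ :=
  (P.filter (fun x =>
    Relation.ReflTransGen (ThreeRootDigraph G c) u (Sum.inr (Sum.inr x)))).card

section
variable {V : Type*} {G : SimpleGraph V} {c : G.edgeSet → Fin 3}

lemma trd_vertex_no_out {v : V} {b} (h : ThreeRootDigraph G c (Sum.inr (Sum.inr v)) b) : False := by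
  cases b with
  | inl i => exact h
  | inr b => cases b <;> exact h

lemma reach_vertex {v : V} {u} (h : Relation.ReflTransGen (ThreeRootDigraph G c) (Sum.inr (Sum.inr v)) u) :
    u = Sum.inr (Sum.inr v) := by
  rcases h.cases_head with h | ⟨b, hb, _⟩
  · exact h.symm
  · exact absurd hb trd_vertex_no_out

lemma reach_edge {e : G.edgeSet} {x : V} :
    Relation.ReflTransGen (ThreeRootDigraph G c) (Sum.inr (Sum.inl e)) (Sum.inr (Sum.inr x)) ↔
      x ∈ (e : Sym2 V) := by
  constructor
  · intro h
    rcases h.cases_head with h | ⟨b, hb, hrest⟩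
    · simp at h
    · cases b with
      | inl i => exact hb.elim
      | inr b =>
        cases b with
        | inl f => exact hb.elim
        | inr w =>
          have hx := reach_vertex hrest
          simp only [Sum.inr.injEq] at hx
          subst hx
          exact hb
  · intro hx
    exact Relation.ReflTransGen.single hx

lemma reach_root {i : Fin 3} {x : V} :
    Relation.ReflTransGen (ThreeRootDigraph G c) (Sum.inl i) (Sum.inr (Sum.inr x)) ↔
      ∃ e : G.edgeSet, c e = i ∧ x ∈ (e : Sym2 V) := by
  constructor
  · intro h
    rcases h.cases_head with h | ⟨b, hb, hrest⟩
    · simp at h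
    · cases b with
      | inl j => exact hb.elim
      | inr b =>
        cases b with
        | inl e => exact ⟨e, hb, reach_edge.1 hrest⟩
        | inr w => exact hb.elim
  · rintro ⟨e, hce, hxe⟩
    exact Relation.ReflTransGen.head (show ThreeRootDigraph G c (Sum.inl i) (Sum.inr (Sum.inl e)) from hce)
      (Relation.ReflTransGen.single (show ThreeRootDigraph G c (Sum.inr (Sum.inl e)) (Sum.inr (Sum.inr x)) from hxe))

end

section
variable {V : Type*} [Fintype V] [DecidableEq V] {G : SimpleGraph V} {c : G.edgeSet → Fin 3}

lemma exists_edge_color (hcubic : IsCubic G) (hproper : ProperEdgeColoring G c) (v : V)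
    (i : Fin 3) : ∃ e : G.edgeSet, c e = i ∧ v ∈ (e : Sym2 V) := by
  classical
  set N := Finset.univ.filter (fun w => G.Adj v w) with hN
  have hcard : N.card = 3 := hcubic v
  have hmem : ∀ w : {x // x ∈ N}, s(v, w.1) ∈ G.edgeSet := by
    intro w
    have h2 := Finset.mem_filter.1 w.2
    exact h2.2
  let f : {x // x ∈ N} → Fin 3 := fun w => c ⟨s(v, w.1), hmem w⟩
  have hinj : Function.Injective f := by
    intro w1 w2 hf
    by_contra hne
    have hvne : w1.1 ≠ w2.1 := fun h => hne (Subtype.ext h)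
    have hedge_ne : (⟨s(v, w1.1), hmem w1⟩ : G.edgeSet) ≠ ⟨s(v, w2.1), hmem w2⟩ := by
      intro h
      have h2 : s(v, w1.1) = s(v, w2.1) := congrArg Subtype.val h
      exact hvne (Sym2.congr_right.1 h2)
    exact hproper _ _ hedge_ne ⟨v, by simp, by simp⟩ hf
  have hsurj : Function.Surjective f := by
    have h1 : Fintype.card {x // x ∈ N} = Fintype.card (Fin 3) := by
      simp [Fintype.card_coe, hcard]
    exact ((Fintype.bijective_iff_injective_and_card f).2 ⟨hinj, h1⟩).2
  obtain ⟨w, hw⟩ := hsurj i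
  exact ⟨⟨s(v, w.1), hmem w⟩, hw, by simp⟩

lemma fN_root (hcubic : IsCubic G) (hproper : ProperEdgeColoring G c) (P : Finset V)
    (i : Fin 3) : failureNumber G c P (Sum.inl i) = P.card := by
  unfold failureNumber
  congr 1
  rw [Finset.filter_eq_self]
  intro x _
  obtain ⟨e, hce, hxe⟩ := exists_edge_color hcubic hproper x i
  exact reach_root.2 ⟨e, hce, hxe⟩

lemma fN_edge (P : Finset V) (e : G.edgeSet) :
    failureNumber G c P (Sum.inr (Sum.inl e)) = (P.filter (fun x => x ∈ (e : Sym2 V))).card := by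
  unfold failureNumber
  congr 1
  apply Finset.filter_congr
  intro x _
  simp [reach_edge]

lemma fN_vertex_le (P : Finset V) (v : V) :
    failureNumber G c P (Sum.inr (Sum.inr v)) ≤ 1 := by
  unfold failureNumber
  calc (P.filter (fun x =>
        Relation.ReflTransGen (ThreeRootDigraph G c) (Sum.inr (Sum.inr v))
          (Sum.inr (Sum.inr x)))).card ≤ ({v} : Finset V).card := by
        apply Finset.card_le_card
        intro x hx
        rw [Finset.mem_filter] at hx
        have := reach_vertex hx.2
        simp only [Sum.inr.injEq] at this
        simp [this]
    _ = 1 := Finset.card_singleton v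

end

/-- For `k ≥ 2`, there is a placement `P ⊆ V` of size `k` such that at
most 3 nodes of the 3-root digraph have failure number `k` and no node has failure
number strictly between 1 and `k`, iff `G` admits an independent set of size `k`. -/
theorem placement_iff_independent_set {V : Type*} [Fintype V] [DecidableEq V]
    (G : SimpleGraph V) (c : G.edgeSet → Fin 3)
    (hcubic : IsCubic G) (hproper : ProperEdgeColoring G c) (k : ℕ) (hk : 2 ≤ k) :
    (∃ P : Finset V, P.card = k ∧
      (Finset.univ.filter
        (fun u : Fin 3 ⊕ (G.edgeSet ⊕ V) => failureNumber G c P u = k)).card ≤ 3 ∧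
      ∀ u : Fin 3 ⊕ (G.edgeSet ⊕ V),
        ¬ (1 < failureNumber G c P u ∧ failureNumber G c P u < k)) ↔
    (∃ I : Finset V, I.card = k ∧ ∀ v ∈ I, ∀ w ∈ I, ¬ G.Adj v w) := by
  constructor
  · rintro ⟨P, hPcard, hcount, hno⟩
    refine ⟨P, hPcard, ?_⟩
    intro a ha b hb hadj
    have he : s(a, b) ∈ G.edgeSet := hadj
    set e : G.edgeSet := ⟨s(a, b), he⟩ with hedef
    have hab : a ≠ b := G.ne_of_adj hadj
    have hfe : failureNumber G c P (Sum.inr (Sum.inl e)) = 2 := by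
      rw [fN_edge]
      have hfeq : P.filter (fun x => x ∈ (e : Sym2 V)) = {a, b} := by
        ext x
        simp only [Finset.mem_filter, hedef, Sym2.mem_iff, Finset.mem_insert,
          Finset.mem_singleton]
        constructor
        · rintro ⟨_, h⟩; exact h
        · rintro (rfl | rfl)
          · exact ⟨ha, Or.inl rfl⟩
          · exact ⟨hb, Or.inr rfl⟩
      rw [hfeq, Finset.card_insert_of_notMem (by simp [hab]), Finset.card_singleton]
    rcases eq_or_lt_of_le hk with h2k | h2k
    · -- k = 2 : four distinct nodes with failure number k
      have hroot : ∀ i : Fin 3, failureNumber G c P (Sum.inl i) = k := by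
        intro i; rw [fN_root hcubic hproper, hPcard]
      have hsub : ({Sum.inl 0, Sum.inl 1, Sum.inl 2, Sum.inr (Sum.inl e)} :
          Finset (Fin 3 ⊕ (G.edgeSet ⊕ V))) ⊆
          Finset.univ.filter (fun u => failureNumber G c P u = k) := by
        intro u hu
        simp only [Finset.mem_insert, Finset.mem_singleton] at hu
        rw [Finset.mem_filter]
        refine ⟨Finset.mem_univ _, ?_⟩
        rcases hu with rfl | rfl | rfl | rfl
        · exact hroot 0
        · exact hroot 1
        · exact hroot 2
        · rw [hfe, ← h2k]
      have hc4 : ({Sum.inl 0, Sum.inl 1, Sum.inl 2, Sum.inr (Sum.inl e)} :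
          Finset (Fin 3 ⊕ (G.edgeSet ⊕ V))).card = 4 := by
        rw [Finset.card_insert_of_notMem (by simp), Finset.card_insert_of_notMem (by simp),
          Finset.card_insert_of_notMem (by simp), Finset.card_singleton]
      have := Finset.card_le_card hsub
      omega
    · exact hno (Sum.inr (Sum.inl e)) ⟨by omega, by omega⟩
  · rintro ⟨I, hI, hind⟩
    have hedge : ∀ e : G.edgeSet, failureNumber G c I (Sum.inr (Sum.inl e)) ≤ 1 := by
      intro e
      rw [fN_edge]
      apply Finset.card_le_one.2
      intro x hx y hy
      rw [Finset.mem_filter] at hx hy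
      by_contra hxy
      have hmm := (Sym2.mem_and_mem_iff hxy).1 ⟨hx.2, hy.2⟩
      have hadj : G.Adj x y := by
        have := e.2
        rw [hmm] at this
        exact this
      exact hind x hx.1 y hy.1 hadj
    refine ⟨I, hI, ?_, ?_⟩
    · have hsub : Finset.univ.filter
          (fun u : Fin 3 ⊕ (G.edgeSet ⊕ V) => failureNumber G c I u = k) ⊆
          (Finset.univ : Finset (Fin 3)).image Sum.inl := by
        intro u hu
        rw [Finset.mem_filter] at hu
        match u with
        | Sum.inl i => simp
        | Sum.inr (Sum.inl e) =>
          have := hedge e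
          omega
        | Sum.inr (Sum.inr v) =>
          have := fN_vertex_le (G := G) (c := c) I v
          omega
      calc (Finset.univ.filter
            (fun u : Fin 3 ⊕ (G.edgeSet ⊕ V) => failureNumber G c I u = k)).card
          ≤ ((Finset.univ : Finset (Fin 3)).image Sum.inl).card := Finset.card_le_card hsub
        _ ≤ (Finset.univ : Finset (Fin 3)).card := Finset.card_image_le
        _ = 3 := by simp
    · intro u
      match u with
      | Sum.inl i =>
        rw [fN_root hcubic hproper, hI]
        omega
      | Sum.inr (Sum.inl e) =>
        have := hedge e
        omega
      | Sum.inr (Sum.inr v) =>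
        have := fN_vertex_le (G := G) (c := c) I v
        omega
end
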